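/- Let (Z,d) be a separable metric space, μ a Borel probability measure on Z, and (z_i)_{i∈ℕ} an i.i.d. sequence with distribution μ. Then almost surely, for every i ∈ ℕ and every ε > 0, there exists j ≠ i with d(z_i, z_j) ≤ ε. -/

import Mathlib

open MeasureTheory ProbabilityTheory

lemma aux5 {Z : Type*} [MeasurableSpace Z]
    {Ω : Type*} [MeasurableSpace Ω] (μ : Measure Ω) [IsProbabilityMeasure μ]
    (ν : Measure Z) [IsProbabilityMeasure ν]
    (z : ℕ → Ω → Z)
    (hmeas : ∀ i, Measurable (z i))
    (hindep : iIndepFun z μ)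
    (hlaw : ∀ i, Measure.map (z i) μ = ν)
    (B : Set Z) (hB : MeasurableSet B) (i : ℕ) :
    μ {ω | z i ω ∈ B ∧ ∀ j, j ≠ i → z j ω ∉ B} = 0 := by
  have hmap : ∀ j (A : Set Z), MeasurableSet A → μ (z j ⁻¹' A) = ν A := by
    intro j A hA
    rw [← hlaw j, Measure.map_apply (hmeas j) hA]
  rcases eq_or_ne (ν B) 0 with h0 | h0
  · have hsub : {ω | z i ω ∈ B ∧ ∀ j, j ≠ i → z j ω ∉ B} ⊆ z i ⁻¹' B :=
      fun ω hω => hω.1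
    refine measure_mono_null hsub ?_
    rw [hmap i B hB]; exact h0
  -- ν B > 0 case
  set sets : ℕ → Set Z := fun j => if j = i then B else Bᶜ with hsets
  have hsetsmeas : ∀ j, MeasurableSet (sets j) := by
    intro j; simp only [hsets]; split <;> [exact hB; exact hB.compl]
  have hinj : Function.Injective (fun m : ℕ => i + 1 + m) := by
    intro a b h; simpa using h
  have key : ∀ n : ℕ,
      μ {ω | z i ω ∈ B ∧ ∀ j, j ≠ i → z j ω ∉ B} ≤ ν B * (1 - ν B) ^ n := by
    intro n
    set t : Finset ℕ := (Finset.range n).image (fun m => i + 1 + m) with ht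
    have hit : i ∉ t := by
      simp only [ht, Finset.mem_image, Finset.mem_range]
      rintro ⟨m, -, h⟩; omega
    have hsub : {ω | z i ω ∈ B ∧ ∀ j, j ≠ i → z j ω ∉ B} ⊆
        ⋂ j ∈ insert i t, z j ⁻¹' sets j := by
      intro ω hω
      simp only [Set.mem_iInter, Finset.mem_insert]
      rintro j (rfl | hj)
      · simpa [hsets] using hω.1
      · have hji : j ≠ i := by rintro rfl; exact hit hj
        simpa [hsets, hji] using hω.2 j hji
    have hprod := hindep.measure_inter_preimage_eq_mul (insert i t)
      (sets := sets) (fun j _ => hsetsmeas j)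
    calc μ {ω | z i ω ∈ B ∧ ∀ j, j ≠ i → z j ω ∉ B}
        ≤ μ (⋂ j ∈ insert i t, z j ⁻¹' sets j) := measure_mono hsub
      _ = ∏ j ∈ insert i t, μ (z j ⁻¹' sets j) := hprod
      _ = ν B * (1 - ν B) ^ n := by
          rw [Finset.prod_insert hit]
          have h1 : μ (z i ⁻¹' sets i) = ν B := by
            simp only [hsets, if_pos rfl]; exact hmap i B hB
          have h2 : ∀ j ∈ t, μ (z j ⁻¹' sets j) = 1 - ν B := by
            intro j hj
            have hji : j ≠ i := by rintro rfl; exact hit hj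
            simp only [hsets, if_neg hji]
            rw [hmap j Bᶜ hB.compl, measure_compl hB (measure_ne_top ν B),
              measure_univ]
          rw [h1, Finset.prod_congr rfl h2, Finset.prod_const,
            Finset.card_image_of_injective _ hinj, Finset.card_range]
  have hlt : 1 - ν B < 1 :=
    ENNReal.sub_lt_self ENNReal.one_ne_top one_ne_zero h0
  have htend : Filter.Tendsto (fun n => ν B * (1 - ν B) ^ n) Filter.atTop (nhds 0) := by
    have := ENNReal.Tendsto.const_mul (a := ν B)
      (ENNReal.tendsto_pow_atTop_nhds_zero_of_lt_one hlt) (Or.inr (measure_ne_top ν B))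
    simpa using this
  have := ge_of_tendsto htend (Filter.Eventually.of_forall key)
  simpa using this

theorem stmt5 {Z : Type*} [MetricSpace Z] [TopologicalSpace.SeparableSpace Z]
    [MeasurableSpace Z] [BorelSpace Z]
    {Ω : Type*} [MeasurableSpace Ω] (μ : Measure Ω) [IsProbabilityMeasure μ]
    (ν : Measure Z) [IsProbabilityMeasure ν]
    (z : ℕ → Ω → Z)
    (hmeas : ∀ i, Measurable (z i))
    (hindep : iIndepFun z μ)
    (hlaw : ∀ i, Measure.map (z i) μ = ν) :
    ∀ᵐ ω ∂μ, ∀ i : ℕ, ∀ ε : ℝ, 0 < ε → ∃ j, j ≠ i ∧ dist (z i ω) (z j ω) ≤ ε := by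
  rcases isEmpty_or_nonempty Z with hZ | hZ
  · exact Filter.Eventually.of_forall fun ω => (hZ.false (z 0 ω)).elim
  · set u := TopologicalSpace.denseSeq Z with hu'
    have hu : DenseRange u := TopologicalSpace.denseRange_denseSeq Z
    set Bs : ℕ → ℕ → Set Z := fun k n => Metric.ball (u k) (1 / ((n : ℝ) + 1)) with hBs
    have hnull : ∀ i k n : ℕ,
        μ {ω | z i ω ∈ Bs k n ∧ ∀ j, j ≠ i → z j ω ∉ Bs k n} = 0 := fun i k n =>
      aux5 μ ν z hmeas hindep hlaw _ Metric.isOpen_ball.measurableSet i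
    have hae : ∀ᵐ ω ∂μ, ∀ i k n : ℕ,
        ¬(z i ω ∈ Bs k n ∧ ∀ j, j ≠ i → z j ω ∉ Bs k n) := by
      refine ae_all_iff.2 fun i => ae_all_iff.2 fun k => ae_all_iff.2 fun n => ?_
      rw [ae_iff]
      simpa [not_not] using hnull i k n
    filter_upwards [hae] with ω hω i ε hε
    obtain ⟨n, hn⟩ := exists_nat_one_div_lt (show (0:ℝ) < ε / 2 by positivity)
    have hrpos : (0:ℝ) < 1 / ((n : ℝ) + 1) := by positivity
    obtain ⟨k, hk⟩ := Metric.denseRange_iff.1 hu (z i ω) (1 / ((n : ℝ) + 1)) hrpos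
    have hmem : z i ω ∈ Bs k n := by
      rw [hBs, Metric.mem_ball]; exact hk
    have h := hω i k n
    push_neg at h
    obtain ⟨j, hj, hjmem⟩ := h hmem
    refine ⟨j, hj, ?_⟩
    have h1 : dist (z i ω) (u k) < 1 / ((n : ℝ) + 1) := hk
    have h2 : dist (u k) (z j ω) < 1 / ((n : ℝ) + 1) := by
      rw [dist_comm]; exact Metric.mem_ball.1 hjmem
    calc dist (z i ω) (z j ω) ≤ dist (z i ω) (u k) + dist (u k) (z j ω) :=
          dist_triangle _ _ _
      _ ≤ ε / 2 + ε / 2 := by linarith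
      _ = ε := by ring
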